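/- The Kostka number K_{λ,μ} is positive if and only if λ dominates μ, i.e. λ₁+⋯+λ_i ≥ μ₁+⋯+μ_i for all i. -/

import Mathlib

open Finset

namespace KostkaAux

lemma rowLen_eq {μ : YoungDiagram} {i X : ℕ} (h : ∀ j, (i, j) ∈ μ ↔ j < X) :
    μ.rowLen i = X := by
  rcases Nat.lt_trichotomy (μ.rowLen i) X with hlt | heq | hgt
  · have := YoungDiagram.mem_iff_lt_rowLen.mp ((h (μ.rowLen i)).mpr hlt)
    omega
  · exact heq
  · have := (h X).mp (YoungDiagram.mem_iff_lt_rowLen.mpr hgt)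
    omega

lemma rowLen_eq_zero {μ : YoungDiagram} {i : ℕ} (h : (i, 0) ∉ μ) : μ.rowLen i = 0 := by
  by_contra hne
  exact h (YoungDiagram.mem_iff_lt_rowLen.mpr (Nat.pos_of_ne_zero hne))

/-- Shrink a Young diagram by capping row `i` at length `g i`, for antitone `g`. -/
def sub (lam : YoungDiagram) (g : ℕ → ℕ) (hg : Antitone g) : YoungDiagram where
  cells := lam.cells.filter (fun c => c.2 < g c.1)
  isLowerSet := by
    rintro ⟨i2, j2⟩ ⟨i1, j1⟩ ⟨hi, hj⟩ hc
    simp only [Finset.coe_filter, Set.mem_setOf_eq, YoungDiagram.mem_cells] at hc ⊢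
    exact ⟨lam.up_left_mem hi hj hc.1, lt_of_le_of_lt hj (lt_of_lt_of_le hc.2 (hg hi))⟩

lemma mem_sub {lam : YoungDiagram} {g : ℕ → ℕ} {hg : Antitone g} {c : ℕ × ℕ} :
    c ∈ sub lam g hg ↔ c ∈ lam ∧ c.2 < g c.1 := by
  show c ∈ YoungDiagram.mk _ _ ↔ _
  exact Finset.mem_filter

lemma sub_cells_subset (lam : YoungDiagram) (g : ℕ → ℕ) (hg : Antitone g) :
    (sub lam g hg).cells ⊆ lam.cells :=
  Finset.filter_subset _ _

lemma rowLen_sub (lam : YoungDiagram) (g : ℕ → ℕ) (hg : Antitone g) (i : ℕ) :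
    (sub lam g hg).rowLen i = min (lam.rowLen i) (g i) := by
  apply rowLen_eq
  intro j
  rw [mem_sub, YoungDiagram.mem_iff_lt_rowLen]
  simp only [lt_min_iff]

lemma colLen_sub_le (lam : YoungDiagram) (g : ℕ → ℕ) (hg : Antitone g) :
    (sub lam g hg).colLen 0 ≤ lam.colLen 0 := by
  by_contra hlt
  push_neg at hlt
  have h1 : (lam.colLen 0, 0) ∈ sub lam g hg := YoungDiagram.mem_iff_lt_colLen.mpr hlt
  have h2 := (mem_sub.mp h1).1
  rw [YoungDiagram.mem_iff_lt_colLen] at h2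
  omega

lemma card_filter_row_lt (μ : YoungDiagram) (N : ℕ) :
    (μ.cells.filter (fun c => c.1 < N)).card = ∑ i ∈ Finset.range N, μ.rowLen i := by
  induction N with
  | zero => simp
  | succ n ih =>
    rw [Finset.sum_range_succ, ← ih, μ.rowLen_eq_card]
    have hsplit : μ.cells.filter (fun c => c.1 < n + 1)
        = μ.cells.filter (fun c => c.1 < n) ∪ μ.row n := by
      rw [YoungDiagram.row, ← Finset.filter_or]
      apply Finset.filter_congr
      intro c _
      constructor
      · intro h; omega
      · rintro (h | h) <;> omega
    rw [hsplit, Finset.card_union_of_disjoint]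
    rw [Finset.disjoint_left]
    intro c hc1 hc2
    rw [Finset.mem_filter] at hc1
    rw [YoungDiagram.mem_row_iff] at hc2
    omega

lemma card_eq_sum (μ : YoungDiagram) {N : ℕ} (hN : μ.colLen 0 ≤ N) :
    μ.card = ∑ i ∈ Finset.range N, μ.rowLen i := by
  rw [← card_filter_row_lt]
  rw [Finset.filter_true_of_mem]
  rintro ⟨a, b⟩ hc
  rw [YoungDiagram.mem_cells, YoungDiagram.mem_iff_lt_colLen] at hc
  have := μ.colLen_anti 0 b (Nat.zero_le b)
  omega

lemma rowLen_zero_of_colLen_le (μ : YoungDiagram) {i : ℕ} (h : μ.colLen 0 ≤ i) :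
    μ.rowLen i = 0 := by
  apply rowLen_eq_zero
  rw [YoungDiagram.mem_iff_lt_colLen]
  omega


lemma sum_count_eq (lam : YoungDiagram) (T : SemistandardYoungTableau lam) (N : ℕ) :
    ∑ k ∈ Finset.range N, (lam.cells.filter (fun c => T.entry c.1 c.2 = k)).card
      = (lam.cells.filter (fun c => T.entry c.1 c.2 < N)).card := by
  induction N with
  | zero => simp
  | succ n ih =>
    rw [Finset.sum_range_succ, ih]
    have hsplit : lam.cells.filter (fun c => T.entry c.1 c.2 < n + 1)
        = lam.cells.filter (fun c => T.entry c.1 c.2 < n)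
          ∪ lam.cells.filter (fun c => T.entry c.1 c.2 = n) := by
      rw [← Finset.filter_or]
      apply Finset.filter_congr
      intro c _
      constructor
      · intro h; omega
      · rintro (h | h) <;> omega
    rw [hsplit, Finset.card_union_of_disjoint]
    rw [Finset.disjoint_left]
    intro c hc1 hc2
    rw [Finset.mem_filter] at hc1 hc2
    omega

lemma entry_row_le (lam : YoungDiagram) (T : SemistandardYoungTableau lam) :
    ∀ r j, (r, j) ∈ lam → r ≤ T.entry r j := by
  intro r
  induction r with
  | zero => intro j _; exact Nat.zero_le _
  | succ n ihn =>
    intro j hc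
    have h1 := T.col_strict (Nat.lt_succ_self n) hc
    have h2 := ihn j (lam.up_left_mem (Nat.le_succ n) le_rfl hc)
    simp only [SemistandardYoungTableau.to_fun_eq_coe, Nat.succ_eq_add_one] at *
    omega

lemma dominates_of_content (lam mu : YoungDiagram) (T : SemistandardYoungTableau lam)
    (hT : ∀ k : ℕ, (lam.cells.filter (fun c => T.entry c.1 c.2 = k)).card = mu.rowLen k)
    (i : ℕ) :
    ∑ k ∈ Finset.range (i + 1), mu.rowLen k ≤ ∑ k ∈ Finset.range (i + 1), lam.rowLen k := by
  have key := entry_row_le lam T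
  calc ∑ k ∈ Finset.range (i + 1), mu.rowLen k
      = (lam.cells.filter (fun c => T.entry c.1 c.2 < i + 1)).card := by
        rw [← sum_count_eq]
        exact Finset.sum_congr rfl (fun k _ => (hT k).symm)
    _ ≤ (lam.cells.filter (fun c => c.1 < i + 1)).card := by
        apply Finset.card_le_card
        rintro ⟨a, b⟩ hc
        rw [Finset.mem_filter] at hc ⊢
        have := key a b (YoungDiagram.mem_cells _ |>.mp hc.1)
        exact ⟨hc.1, by simp only at hc ⊢; omega⟩
    _ = ∑ k ∈ Finset.range (i + 1), lam.rowLen k := card_filter_row_lt lam (i + 1)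

lemma finite_content (lam mu : YoungDiagram) :
    Finite {T : SemistandardYoungTableau lam //
      ∀ k : ℕ, (lam.cells.filter (fun c => T.entry c.1 c.2 = k)).card = mu.rowLen k} := by
  let f : {T : SemistandardYoungTableau lam //
      ∀ k : ℕ, (lam.cells.filter (fun c => T.entry c.1 c.2 = k)).card = mu.rowLen k} →
      ({c : ℕ × ℕ // c ∈ lam.cells} → Fin (mu.colLen 0 + 1)) :=
    fun T c => ⟨T.1.entry c.1.1 c.1.2, by
      have hmem : (c.1 : ℕ × ℕ) ∈ lam.cells.filter
          (fun d => T.1.entry d.1 d.2 = T.1.entry c.1.1 c.1.2) := by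
        rw [Finset.mem_filter]
        exact ⟨c.2, rfl⟩
      have hpos : 0 < mu.rowLen (T.1.entry c.1.1 c.1.2) := by
        rw [← T.2 (T.1.entry c.1.1 c.1.2)]
        exact Finset.card_pos.mpr ⟨c.1, hmem⟩
      have := YoungDiagram.mem_iff_lt_colLen.mp
        (YoungDiagram.mem_iff_lt_rowLen.mpr hpos)
      omega⟩
  apply Finite.of_injective f
  intro T1 T2 hf
  apply Subtype.ext
  apply SemistandardYoungTableau.ext
  intro i j
  by_cases hmem : (i, j) ∈ lam
  · have := congrFun hf ⟨(i, j), (YoungDiagram.mem_cells _).mpr hmem⟩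
    have := congrArg Fin.val this
    simpa [f] using this
  · exact (T1.1.zeros hmem).trans (T2.1.zeros hmem).symm

lemma exists_empty (lam mu : YoungDiagram) (hcol : mu.colLen 0 = 0)
    (hcard : lam.card = mu.card) :
    ∃ T : SemistandardYoungTableau lam,
      ∀ k : ℕ, (lam.cells.filter (fun c => T.entry c.1 c.2 = k)).card = mu.rowLen k := by
  have hmu : mu.card = 0 := by
    rw [card_eq_sum mu (le_of_eq hcol)]
    simp
  have hlam : lam.cells = ∅ := by
    rw [← Finset.card_eq_zero]
    rw [hmu] at hcard
    exact hcard
  have hnomem : ∀ c : ℕ × ℕ, c ∉ lam := by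
    intro c hc
    rw [← YoungDiagram.mem_cells, hlam] at hc
    exact absurd hc (Finset.notMem_empty c)
  refine ⟨⟨fun _ _ => 0, ?_, ?_, ?_⟩, ?_⟩
  · intro i j1 j2 _ hcell; exact absurd hcell (hnomem _)
  · intro i1 i2 j _ hcell; exact absurd hcell (hnomem _)
  · intro i j _; rfl
  · intro k
    rw [hlam]
    simp only [Finset.filter_empty, Finset.card_empty]
    exact (rowLen_zero_of_colLen_le mu (by omega)).symm

lemma exists_content : ∀ (n : ℕ) (lam mu : YoungDiagram), mu.colLen 0 ≤ n →
    lam.card = mu.card →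
    (∀ i : ℕ, ∑ k ∈ Finset.range (i + 1), mu.rowLen k ≤
      ∑ k ∈ Finset.range (i + 1), lam.rowLen k) →
    ∃ T : SemistandardYoungTableau lam,
      ∀ k : ℕ, (lam.cells.filter (fun c => T.entry c.1 c.2 = k)).card = mu.rowLen k := by
  intro n
  induction n with
  | zero =>
    intro lam mu hcol hcard _
    exact exists_empty lam mu (Nat.le_zero.mp hcol) hcard
  | succ n ih =>
    intro lam mu hcol hcard hdom
    by_cases hle : mu.colLen 0 ≤ n
    · exact ih lam mu hle hcard hdom
    · have hcoleq : mu.colLen 0 = n + 1 := by omega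
      set c := mu.rowLen n with hc_def
      have hn_mem : (n, 0) ∈ mu := YoungDiagram.mem_iff_lt_colLen.mpr (by omega)
      have hc_pos : 0 < c := by
        rw [hc_def]; exact YoungDiagram.mem_iff_lt_rowLen.mp hn_mem
      have hmu_hi : ∀ k, n < k → mu.rowLen k = 0 := fun k hk =>
        rowLen_zero_of_colLen_le mu (by omega)
      have hc_le : c ≤ lam.rowLen 0 := by
        have h0 := hdom 0
        simp at h0
        have := mu.rowLen_anti 0 n (Nat.zero_le n)
        omega
      -- the shrunk shape lam'
      set g : ℕ → ℕ := fun i => lam.rowLen (i + 1) + (lam.rowLen i - c) with hg_def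
      have hg : Antitone g := by
        intro a b hab
        simp only [hg_def]
        have h1 := lam.rowLen_anti (a + 1) (b + 1) (by omega)
        have h2 := lam.rowLen_anti a b hab
        omega
      set lam' := sub lam g hg with hlam'_def
      have hrl' : ∀ i, lam'.rowLen i = min (lam.rowLen i) (g i) := rowLen_sub lam g hg
      have hanti : ∀ i, lam.rowLen (i + 1) ≤ lam.rowLen i := fun i =>
        lam.rowLen_anti i (i + 1) (Nat.le_succ i)
      have hf2 : ∀ i, lam'.rowLen i + (c - lam.rowLen (i + 1))
          = lam.rowLen i + (c - lam.rowLen i) := by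
        intro i
        rw [hrl' i]
        simp only [hg_def]
        have := hanti i
        omega
      have hf3 : ∀ N, ∑ i ∈ Finset.range N, lam'.rowLen i + (c - lam.rowLen N)
          = ∑ i ∈ Finset.range N, lam.rowLen i + (c - lam.rowLen 0) := by
        intro N
        induction N with
        | zero => simp
        | succ N ihN =>
          rw [Finset.sum_range_succ, Finset.sum_range_succ]
          have := hf2 N
          omega
      have hsub' : lam'.cells ⊆ lam.cells := sub_cells_subset lam g hg
      have hcolle : lam'.colLen 0 ≤ lam.colLen 0 := colLen_sub_le lam g hg
      have hlamN : lam.rowLen (lam.colLen 0) = 0 := rowLen_zero_of_colLen_le lam le_rfl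
      have hcard' : lam'.card + c = lam.card := by
        rw [card_eq_sum lam (le_refl (lam.colLen 0)), card_eq_sum lam' hcolle]
        have h3 := hf3 (lam.colLen 0)
        rw [hlamN] at h3
        omega
      -- mu' : mu with last row removed
      set gm : ℕ → ℕ := fun i => if i < n then mu.rowLen i else 0 with hgm_def
      have hgm : Antitone gm := by
        intro a b hab
        simp only [hgm_def]
        by_cases hb : b < n
        · rw [if_pos hb, if_pos (lt_of_le_of_lt hab hb)]
          exact mu.rowLen_anti a b hab
        · rw [if_neg hb]; exact Nat.zero_le _
      set mu' := sub mu gm hgm with hmu'_def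
      have hrlm' : ∀ i, mu'.rowLen i = if i < n then mu.rowLen i else 0 := by
        intro i
        rw [rowLen_sub mu gm hgm i]
        simp only [hgm_def]
        split_ifs with hi
        · exact min_self _
        · exact Nat.min_zero _
      have hmcol : mu'.colLen 0 ≤ n := by
        by_contra hx
        push_neg at hx
        have h1 : (n, 0) ∈ mu' := YoungDiagram.mem_iff_lt_colLen.mpr hx
        have h2 := (mem_sub.mp h1).2
        simp only [hgm_def] at h2
        rw [if_neg (lt_irrefl n)] at h2
        omega
      have hmucard : mu'.card + c = mu.card := by
        rw [card_eq_sum mu (le_of_eq hcoleq), card_eq_sum mu' (le_trans hmcol (Nat.le_succ n))]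
        rw [Finset.sum_range_succ, Finset.sum_range_succ]
        have hsum : ∑ i ∈ Finset.range n, mu'.rowLen i = ∑ i ∈ Finset.range n, mu.rowLen i :=
          Finset.sum_congr rfl (fun i hi => by rw [hrlm' i, if_pos (Finset.mem_range.mp hi)])
        rw [hrlm' n, if_neg (lt_irrefl n)]
        omega
      have hcards : lam'.card = mu'.card := by omega
      have hps : ∀ j, ∑ i ∈ Finset.range (j + 1), lam'.rowLen i + (c - lam.rowLen (j + 1))
          = ∑ i ∈ Finset.range (j + 1), lam.rowLen i := by
        intro j
        have h1 := hf3 (j + 1)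
        have h2 : c - lam.rowLen 0 = 0 := by omega
        omega
      have hdom' : ∀ j, ∑ k ∈ Finset.range (j + 1), mu'.rowLen k ≤
          ∑ k ∈ Finset.range (j + 1), lam'.rowLen k := by
        intro j
        by_cases hj : j + 1 ≤ n
        · have hM : ∑ k ∈ Finset.range (j + 1), mu'.rowLen k
              = ∑ k ∈ Finset.range (j + 1), mu.rowLen k :=
            Finset.sum_congr rfl (fun k hk => by
              rw [hrlm' k, if_pos (by have := Finset.mem_range.mp hk; omega)])
          have h1 := hps j
          have h2 := hdom j
          have h3 := hdom (j + 1)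
          have h4 := Finset.sum_range_succ (fun k => mu.rowLen k) (j + 1)
          have h5 := Finset.sum_range_succ (fun k => lam.rowLen k) (j + 1)
          have h6 : c ≤ mu.rowLen (j + 1) := by
            rw [hc_def]; exact mu.rowLen_anti (j + 1) n (by omega)
          omega
        · have hM' : ∑ k ∈ Finset.range (j + 1), mu'.rowLen k
              = ∑ k ∈ Finset.range n, mu.rowLen k := by
            rw [← Finset.sum_subset (Finset.range_subset_range.mpr (by omega : n ≤ j + 1))
              (fun x _ hx2 => by
                rw [hrlm' x, if_neg (by rw [Finset.mem_range] at hx2; omega)])]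
            exact Finset.sum_congr rfl (fun k hk => by
              rw [hrlm' k, if_pos (Finset.mem_range.mp hk)])
          have hMfull : ∑ k ∈ Finset.range (j + 1), mu.rowLen k
              = ∑ k ∈ Finset.range n, mu.rowLen k + c := by
            rw [← Finset.sum_subset (Finset.range_subset_range.mpr (by omega : n + 1 ≤ j + 1))
              (fun x hx1 hx2 => by
                rw [Finset.mem_range] at hx2
                exact hmu_hi x (by omega))]
            rw [Finset.sum_range_succ]
          have h1 := hps j
          have h2 := hdom j
          rw [hM', hMfull] at *
          omega
      obtain ⟨T', hT'⟩ := ih lam' mu' hmcol hcards hdom'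
      have hT'lt : ∀ a b, (a, b) ∈ lam' → T'.entry a b < n := by
        intro a b hab
        by_contra hge
        push_neg at hge
        have h1 : (a, b) ∈ lam'.cells.filter (fun d => T'.entry d.1 d.2 = T'.entry a b) :=
          Finset.mem_filter.mpr ⟨(YoungDiagram.mem_cells _).mpr hab, rfl⟩
        have h2 : 0 < mu'.rowLen (T'.entry a b) := by
          rw [← hT' (T'.entry a b)]
          exact Finset.card_pos.mpr ⟨_, h1⟩
        rw [hrlm' (T'.entry a b), if_neg (by omega)] at h2
        omega
      set E : ℕ → ℕ → ℕ := fun a b =>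
        if (a, b) ∈ lam'.cells then T'.entry a b
        else if (a, b) ∈ lam.cells then n else 0 with hE_def
      have hrw : ∀ i j1 j2 : ℕ, j1 < j2 → (i, j2) ∈ lam → E i j1 ≤ E i j2 := by
        intro i j1 j2 hj hcell
        simp only [hE_def]
        by_cases h2 : (i, j2) ∈ lam'
        · have h1 : (i, j1) ∈ lam' := lam'.up_left_mem le_rfl (le_of_lt hj) h2
          rw [if_pos ((YoungDiagram.mem_cells _).mpr h1),
            if_pos ((YoungDiagram.mem_cells _).mpr h2)]
          exact T'.row_weak hj h2
        · rw [if_neg (fun hx => h2 ((YoungDiagram.mem_cells _).mp hx)),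
            if_pos ((YoungDiagram.mem_cells _).mpr hcell)]
          by_cases h1 : (i, j1) ∈ lam'
          · rw [if_pos ((YoungDiagram.mem_cells _).mpr h1)]
            exact le_of_lt (hT'lt i j1 h1)
          · rw [if_neg (fun hx => h1 ((YoungDiagram.mem_cells _).mp hx))]
            have h1l : (i, j1) ∈ lam := lam.up_left_mem le_rfl (le_of_lt hj) hcell
            rw [if_pos ((YoungDiagram.mem_cells _).mpr h1l)]
      have hcs : ∀ i1 i2 j : ℕ, i1 < i2 → (i2, j) ∈ lam → E i1 j < E i2 j := by
        intro i1 i2 j hi hcell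
        simp only [hE_def]
        by_cases h2 : (i2, j) ∈ lam'
        · have h1 : (i1, j) ∈ lam' := lam'.up_left_mem (le_of_lt hi) le_rfl h2
          rw [if_pos ((YoungDiagram.mem_cells _).mpr h1),
            if_pos ((YoungDiagram.mem_cells _).mpr h2)]
          exact T'.col_strict hi h2
        · rw [if_neg (fun hx => h2 ((YoungDiagram.mem_cells _).mp hx)),
            if_pos ((YoungDiagram.mem_cells _).mpr hcell)]
          by_cases h1 : (i1, j) ∈ lam'
          · rw [if_pos ((YoungDiagram.mem_cells _).mpr h1)]
            exact hT'lt i1 j h1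
          · exfalso
            have h1l : (i1, j) ∈ lam := lam.up_left_mem (le_of_lt hi) le_rfl hcell
            have hnot : ¬((i1, j) ∈ lam ∧ j < g i1) := fun hx => h1 (mem_sub.mpr hx)
            have hng : ¬ j < g i1 := fun hx => hnot ⟨h1l, hx⟩
            have hj2 : j < lam.rowLen i2 := YoungDiagram.mem_iff_lt_rowLen.mp hcell
            have hle2 : lam.rowLen i2 ≤ lam.rowLen (i1 + 1) :=
              lam.rowLen_anti (i1 + 1) i2 (by omega)
            simp only [hg_def] at hng
            omega
      have hz : ∀ i j : ℕ, (i, j) ∉ lam → E i j = 0 := by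
        intro i j hnot
        simp only [hE_def]
        rw [if_neg, if_neg (fun hx => hnot ((YoungDiagram.mem_cells _).mp hx))]
        intro hx
        exact hnot ((YoungDiagram.mem_cells _).mp (hsub' hx))
      have content : ∀ k : ℕ, (lam.cells.filter (fun d => E d.1 d.2 = k)).card
          = mu.rowLen k := by
        intro k
        have hunion : lam.cells = lam'.cells ∪ (lam.cells \ lam'.cells) :=
          (Finset.union_sdiff_of_subset hsub').symm
        have hdisj : Disjoint (lam'.cells.filter (fun d => E d.1 d.2 = k))
            ((lam.cells \ lam'.cells).filter (fun d => E d.1 d.2 = k)) :=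
          Finset.disjoint_filter_filter Finset.disjoint_sdiff
        rw [hunion, Finset.filter_union, Finset.card_union_of_disjoint hdisj]
        have hfirst : (lam'.cells.filter (fun d => E d.1 d.2 = k)).card = mu'.rowLen k := by
          rw [← hT' k]
          congr 1
          apply Finset.filter_congr
          rintro ⟨a, b⟩ hd
          simp only [hE_def]
          rw [if_pos hd]
        have hsecond : ((lam.cells \ lam'.cells).filter (fun d => E d.1 d.2 = k)).card
            = if k = n then c else 0 := by
          by_cases hk : k = n
          · rw [if_pos hk, Finset.filter_true_of_mem, Finset.card_sdiff_of_subset hsub']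
            · have hc2 : lam'.cells.card + c = lam.cells.card := hcard'
              omega
            · rintro ⟨a, b⟩ hd
              rw [Finset.mem_sdiff] at hd
              simp only [hE_def]
              rw [if_neg hd.2, if_pos hd.1, hk]
          · rw [if_neg hk, Finset.filter_false_of_mem, Finset.card_empty]
            rintro ⟨a, b⟩ hd
            rw [Finset.mem_sdiff] at hd
            simp only [hE_def]
            rw [if_neg hd.2, if_pos hd.1]
            omega
        rw [hfirst, hsecond, hrlm' k]
        by_cases hk : k < n
        · rw [if_pos hk, if_neg (by omega)]
          omega
        · by_cases hk2 : k = n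
          · rw [if_neg (by omega), if_pos hk2]
            subst hk2
            omega
          · rw [if_neg hk, if_neg hk2]
            have := hmu_hi k (by omega)
            omega
      exact ⟨⟨E, fun hj hcell => hrw _ _ _ hj hcell,
        fun hi hcell => hcs _ _ _ hi hcell,
        fun hnc => hz _ _ hnc⟩, content⟩

end KostkaAux

/-- The Kostka number `K_{λ,μ}`: the number of semistandard Young tableaux of shape `λ`
whose content is `μ`, i.e. having exactly `μ_k` entries equal to `k` for every `k`
(entries are indexed starting from `0`, and `μ_k = μ.rowLen k` is the `k`-th part). -/
noncomputable def kostka (lam mu : YoungDiagram) : ℕ :=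
  Nat.card {T : SemistandardYoungTableau lam //
    ∀ k : ℕ, (lam.cells.filter (fun c => T.entry c.1 c.2 = k)).card = mu.rowLen k}


/-- `K_{λ,μ} > 0` iff `λ` dominates `μ` (for partitions of the same `n`). -/
theorem kostka_pos_iff_dominates (lam mu : YoungDiagram) (h : lam.card = mu.card) :
    0 < kostka lam mu ↔
      ∀ i : ℕ, ∑ k ∈ Finset.range (i + 1), mu.rowLen k ≤
        ∑ k ∈ Finset.range (i + 1), lam.rowLen k := by
  have hfin := KostkaAux.finite_content lam mu
  unfold kostka
  constructor
  · intro hpos i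
    obtain ⟨⟨T, hT⟩⟩ := (Nat.card_pos_iff.mp hpos).1
    exact KostkaAux.dominates_of_content lam mu T hT i
  · intro hdom
    obtain ⟨T, hT⟩ := KostkaAux.exists_content (mu.colLen 0) lam mu le_rfl h hdom
    exact Nat.card_pos_iff.mpr ⟨⟨⟨T, hT⟩⟩, hfin⟩
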